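/- For every integer n ≥ 2, ∫₀^∞ x^4 L_{n-2}^{(3)}(x) e^{-(n-1)x/2} e^{-x} dx = (2^6 n (n-1)^{n-3} / (n+1)^{n+3}) · (n+1)!/(n-2)!. -/

import Mathlib

open MeasureTheory

/-- Generalized (associated) Laguerre polynomial
`L^{(m)}_n(x) = ∑_{j=0}^n C(n+m, n-j) (-x)^j / j!`. -/
noncomputable def genLaguerre (n m : ℕ) (x : ℝ) : ℝ :=
  ∑ j ∈ Finset.range (n + 1), ((n + m).choose (n - j) : ℝ) * (-x) ^ j / j.factorial

open Finset Set

lemma choose_id (m j : ℕ) (hm : 1 ≤ m) (hj : j ≤ m) :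
    ((m+3).choose (j+3) : ℝ) * ((j+4).choose 4)
      = ((m+4).choose 4) * (m.choose j) - ((m+3).choose 4) * ((m-1).choose j) := by
  rcases eq_or_lt_of_le hj with rfl | hjm
  · rw [Nat.choose_eq_zero_of_lt (by omega : j - 1 < j)]
    simp [Nat.choose_self]
  · obtain ⟨d, rfl⟩ : ∃ d, m = j + d + 1 := ⟨m - j - 1, by omega⟩
    have e1 : j + d + 1 - 1 = j + d := by omega
    rw [e1]
    rw [Nat.cast_choose ℝ (by omega : j+3 ≤ j+d+1+3), Nat.cast_choose ℝ (by omega : 4 ≤ j+4),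
        Nat.cast_choose ℝ (by omega : 4 ≤ j+d+1+4), Nat.cast_choose ℝ (by omega : j ≤ j+d+1),
        Nat.cast_choose ℝ (by omega : 4 ≤ j+d+1+3), Nat.cast_choose ℝ (by omega : j ≤ j+d)]
    rw [show j+d+1+3 - (j+3) = d+1 by omega, show j+4-4 = j by omega,
        show j+d+1+4-4 = j+d+1 by omega, show j+d+1-j = d+1 by omega,
        show j+d+1+3-4 = j+d by omega, show j+d-j = d by omega]
    have F : ∀ k : ℕ, ((k.factorial : ℝ)) ≠ 0 := fun k => by
      exact_mod_cast (Nat.factorial_pos k).ne'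
    rw [show j+d+1+4 = (j+d+1+3)+1 by omega, Nat.factorial_succ (j+d+1+3),
        show j+4 = (j+3)+1 by omega, Nat.factorial_succ (j+3),
        Nat.factorial_succ d, show j+d+1 = (j+d)+1 by omega, Nat.factorial_succ (j+d)]
    field_simp
    push_cast
    ring

lemma sum_id (m : ℕ) (s : ℝ) :
    ∑ j ∈ Finset.range (m+1), ((m+3).choose (m-j) : ℝ) * ((j+4).choose 4) * (-s)^j
      = ((m+4).choose 4) * (1-s)^m - ((m+3).choose 4) * (1-s)^(m-1) := by
  rcases Nat.eq_zero_or_pos m with rfl | hm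
  · norm_num
  obtain ⟨l, rfl⟩ : ∃ l, m = l + 1 := ⟨m-1, by omega⟩
  have h1 : (1-s)^(l+1) = ∑ j ∈ Finset.range (l+2), ((l+1).choose j : ℝ) * (-s)^j := by
    rw [show (1-s) = (-s) + 1 by ring, add_pow]
    exact Finset.sum_congr rfl fun j hj => by ring
  have h2 : (1-s)^(l+1-1) = ∑ j ∈ Finset.range (l+2), ((l.choose j : ℝ)) * (-s)^j := by
    rw [Finset.sum_range_succ, Nat.choose_eq_zero_of_lt (by omega : l < l+1)]
    rw [show l+1-1 = l by omega, show (1-s) = (-s) + 1 by ring, add_pow]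
    push_cast
    rw [zero_mul, add_zero]
    exact Finset.sum_congr rfl fun j hj => by ring
  rw [h1, h2, Finset.mul_sum, Finset.mul_sum, ← Finset.sum_sub_distrib]
  refine Finset.sum_congr rfl fun j hj => ?_
  have hj' : j ≤ l+1 := by have := Finset.mem_range.mp hj; omega
  have key := choose_id (l+1) j (by omega) hj'
  rw [show l+1-1 = l by omega] at key
  have hs : ((l+1+3).choose (l+1-j) : ℝ) = ((l+1+3).choose (j+3) : ℝ) := by
    rw [← Nat.choose_symm (by omega : j+3 ≤ l+1+3), show l+1+3-(j+3) = l+1-j by omega]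
  rw [hs]
  linear_combination key * (-s)^j


lemma integrable_pow_exp (k : ℕ) {p : ℝ} (hp : 0 < p) :
    IntegrableOn (fun x : ℝ => x ^ k * Real.exp (-(p * x))) (Set.Ioi 0) := by
  have h := Real.GammaIntegral_convergent (s := (k + 1 : ℝ)) (by positivity)
  rw [show (0:ℝ) = p * 0 by ring] at h
  have h2 := (MeasureTheory.integrableOn_Ioi_comp_mul_left_iff
      (fun x : ℝ => Real.exp (-x) * x ^ ((k+1:ℝ) - 1)) (0:ℝ) hp).mpr h
  have h3 : IntegrableOn (((1:ℝ)/p^k) • fun x : ℝ => Real.exp (-(p * x)) * (p * x) ^ ((k+1:ℝ) - 1)) (Ioi 0) := h2.smul ((1:ℝ)/p^k)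
  refine h3.congr_fun (fun x hx => ?_) measurableSet_Ioi
  simp only [smul_eq_mul, Pi.smul_apply]
  rw [show ((k:ℝ)+1) - 1 = (k:ℝ) by ring, Real.mul_rpow hp.le (le_of_lt hx),
    Real.rpow_natCast, Real.rpow_natCast]
  field_simp

lemma integral_pow_exp (k : ℕ) {p : ℝ} (hp : 0 < p) :
    ∫ x in Set.Ioi 0, x ^ k * Real.exp (-(p * x)) = k.factorial / p ^ (k+1) := by
  have h := Real.integral_rpow_mul_exp_neg_mul_Ioi (a := (k+1:ℝ)) (by positivity) hp
  rw [show ((k:ℝ)+1) - 1 = (k:ℝ) by ring] at h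
  have : ∫ x in Set.Ioi 0, x ^ k * Real.exp (-(p * x))
      = ∫ t in Set.Ioi (0:ℝ), t ^ (k:ℝ) * Real.exp (-(p * t)) := by
    refine setIntegral_congr_fun measurableSet_Ioi (fun x hx => ?_)
    rw [Real.rpow_natCast]
  rw [this, h, Real.Gamma_nat_eq_factorial]
  rw [show ((k:ℝ)+1) = ((k+1:ℕ):ℝ) by push_cast; ring, Real.rpow_natCast]
  field_simp
  rw [← mul_pow, one_div, inv_mul_cancel₀ hp.ne', one_pow]


/-- For `n ≥ 2`,
`∫₀^∞ x⁴ L_{n-2}^{(3)}(x) e^{-(n-1)x/2} e^{-x} dx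
  = 2⁶ n (n-1)^{n-3}/(n+1)^{n+3} · (n+1)!/(n-2)!`. -/
theorem laguerre_integral_In (n : ℕ) (hn : 2 ≤ n) :
    ∫ x in Set.Ioi (0 : ℝ),
        x ^ 4 * genLaguerre (n - 2) 3 x * Real.exp (-((n : ℝ) - 1) * x / 2) * Real.exp (-x)
      = 2 ^ 6 * (n : ℝ) * ((n : ℝ) - 1) ^ (n - 3) / ((n : ℝ) + 1) ^ (n + 3)
          * ((n + 1).factorial : ℝ) / ((n - 2).factorial : ℝ) := by
  obtain ⟨m, rfl⟩ : ∃ m, n = m + 2 := ⟨n - 2, by omega⟩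
  simp only [Nat.add_sub_cancel]
  set p : ℝ := ((m:ℝ) + 3) / 2 with hpdef
  have hp0 : 0 < p := by positivity
  clear_value p
  -- Step 1: rewrite the integrand as a finite sum
  have hI : ∀ x ∈ Set.Ioi (0:ℝ),
      x ^ 4 * genLaguerre m 3 x * Real.exp (-(((m+2 : ℕ):ℝ) - 1) * x / 2) * Real.exp (-x)
      = ∑ j ∈ Finset.range (m+1),
          (((m+3).choose (m-j) : ℝ) * (-1)^j / (j.factorial : ℝ))
            * (x^(j+4) * Real.exp (-(p*x))) := by
    intro x _
    unfold genLaguerre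
    rw [Finset.mul_sum, Finset.sum_mul, Finset.sum_mul]
    refine Finset.sum_congr rfl fun j hj => ?_
    rw [mul_assoc (x ^ 4 * _) (Real.exp _) (Real.exp _), ← Real.exp_add]
    have : -(((m+2:ℕ):ℝ) - 1) * x / 2 + -x = -(p * x) := by
      rw [hpdef]; push_cast; ring
    rw [this, show m + 3 = m + 2 + 1 from rfl]
    rw [neg_pow x j]
    ring
  rw [setIntegral_congr_fun measurableSet_Ioi hI]
  rw [MeasureTheory.integral_finset_sum _ (fun j _ =>
    ((integrable_pow_exp (j+4) hp0).const_mul _))]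
  simp_rw [MeasureTheory.integral_const_mul, integral_pow_exp _ hp0]
  -- Step 2: reshape each term into the sum_id form
  have hterm : ∀ j ∈ Finset.range (m+1),
      (((m+3).choose (m-j) : ℝ) * (-1)^j / (j.factorial : ℝ)) * ((j+4).factorial / p ^ (j+4+1))
      = (24 / p^5) * (((m+3).choose (m-j) : ℝ) * ((j+4).choose 4) * (-(1/p))^j) := by
    intro j _
    have hfac : ((j+4).factorial : ℝ) = ((j+4).choose 4 : ℝ) * 24 * (j.factorial : ℝ) := by
      have := Nat.choose_mul_factorial_mul_factorial (by omega : 4 ≤ j + 4)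
      rw [show j + 4 - 4 = j by omega] at this
      exact_mod_cast congrArg (fun t : ℕ => (t:ℝ)) this.symm
    have hj0 : (j.factorial : ℝ) ≠ 0 := by exact_mod_cast (Nat.factorial_pos j).ne'
    have hpne : p ≠ 0 := hp0.ne'
    rw [hfac, neg_pow (1/p) j, div_pow, one_pow, pow_add p j 5]
    field_simp
  rw [Finset.sum_congr rfl hterm, ← Finset.mul_sum, sum_id m (1/p)]
  -- Step 3: final algebra
  have h1s : 1 - 1/p = ((m:ℝ)+1)/((m:ℝ)+3) := by
    rw [hpdef]; field_simp; ring
  rw [h1s]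
  push_cast
  rcases Nat.eq_zero_or_pos m with rfl | hm
  · norm_num [hpdef, Nat.factorial]
  obtain ⟨l, rfl⟩ : ∃ l, m = l + 1 := ⟨m - 1, by omega⟩
  have e2 : l + 1 + 2 + 3 = l + 6 := by omega
  have e3 : l + 1 - 1 = l := by omega
  rw [e3, e2]
  have hA : ((l+1+4).choose 4 : ℝ) * 24 = ((l:ℝ)+5)*((l:ℝ)+4)*((l:ℝ)+3)*((l:ℝ)+2) := by
    rw [Nat.cast_choose ℝ (by omega : 4 ≤ l+1+4), show l+1+4-4 = l+1 by omega]
    rw [show l+1+4 = (l+1)+1+1+1+1 by omega, Nat.factorial_succ, Nat.factorial_succ,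
        Nat.factorial_succ, Nat.factorial_succ]
    have : ((l+1).factorial : ℝ) ≠ 0 := by exact_mod_cast (Nat.factorial_pos _).ne'
    field_simp [Nat.factorial]
    push_cast
    ring
  have hB : ((l+1+3).choose 4 : ℝ) * 24 = ((l:ℝ)+4)*((l:ℝ)+3)*((l:ℝ)+2)*((l:ℝ)+1) := by
    rw [Nat.cast_choose ℝ (by omega : 4 ≤ l+1+3), show l+1+3-4 = l by omega]
    rw [show l+1+3 = l+1+1+1+1 by omega, Nat.factorial_succ, Nat.factorial_succ,
        Nat.factorial_succ]
    have : (l.factorial : ℝ) ≠ 0 := by exact_mod_cast (Nat.factorial_pos _).ne'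
    field_simp [Nat.factorial]
    push_cast
    rw [Nat.factorial_succ l, show Nat.factorial 4 = 24 from rfl]
    push_cast
    ring
  have hF : (((l+1+2)+1).factorial : ℝ) = (((l:ℝ)+4)*((l:ℝ)+3)*((l:ℝ)+2)) * ((l+1).factorial : ℝ) := by
    rw [show l+1+2+1 = (l+1)+1+1+1 by omega, Nat.factorial_succ, Nat.factorial_succ,
        Nat.factorial_succ]
    push_cast
    ring
  have hA' : ((l+1+4).choose 4 : ℝ) = ((l:ℝ)+5)*((l:ℝ)+4)*((l:ℝ)+3)*((l:ℝ)+2)/24 := by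
    linarith
  have hB' : ((l+1+3).choose 4 : ℝ) = ((l:ℝ)+4)*((l:ℝ)+3)*((l:ℝ)+2)*((l:ℝ)+1)/24 := by
    linarith
  rw [hA', hB', hF, hpdef, div_pow, div_pow]
  have d1 : ((l:ℝ)+2) ≠ 0 := by positivity
  have d2 : ((l:ℝ)+4) ≠ 0 := by positivity
  have d3 : (((l+1).factorial : ℝ)) ≠ 0 := by exact_mod_cast (Nat.factorial_pos _).ne'
  push_cast
  rw [div_pow]
  field_simp
  ring
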